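/- Let G be the graph consisting of three disjoint 4-cliques C_1, C_2, C_3 with distinguished vertices x_i ∈ C_i, together with the additional edges x_1x_2 and x_2x_3. Then s(G) = 3 and CCW(G) = 1. -/

import Mathlib

open SimpleGraph

variable {V : Type*}

/-- An ordered clique cover of `G`, encoded as a labeling `f : V → ℕ` whose
fibers (the cliques `C_i = f⁻¹(i)`) are cliques of `G`. -/
def IsOrderedCliqueCover (G : SimpleGraph V) (f : V → ℕ) : Prop :=
  ∀ n : ℕ, G.IsClique {v | f v = n}

/-- The width `W(C)` of an ordered clique cover: the maximum of `|j - i|` over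
edges `xy` of `G` with `x ∈ C_i`, `y ∈ C_j`. -/
noncomputable def coverWidth (G : SimpleGraph V) (f : V → ℕ) : ℕ :=
  sSup {d : ℕ | ∃ x y, G.Adj x y ∧ d = Nat.dist (f x) (f y)}

/-- The clique cover width `CCW(G)`: minimum width over ordered clique covers. -/
noncomputable def CCW (G : SimpleGraph V) : ℕ :=
  sInf {w : ℕ | ∃ f : V → ℕ, IsOrderedCliqueCover G f ∧ coverWidth G f = w}

/-- `s(G)`: the maximum number of leaves of an induced star in `G`
(an independent set whose members are all adjacent to a common center `r`
outside the set); defined as `1` when `|V(G)| ≤ 2`. -/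
noncomputable def starNum (G : SimpleGraph V) [Fintype V] : ℕ :=
  if Fintype.card V ≤ 2 then 1
  else sSup {k : ℕ | ∃ (r : V) (L : Finset V), r ∉ L ∧ Gᶜ.IsClique (L : Set V) ∧
    (∀ v ∈ L, G.Adj r v) ∧ L.card = k}

/-- the graph of three disjoint 4-cliques (indexed by `Fin 3`,
each with vertex set `Fin 4` and distinguished vertex `x_i = (i, 0)`), with the
extra edges `x_1x_2` and `x_2x_3` between consecutive cliques. -/
def threeCliqueGraph : SimpleGraph (Fin 3 × Fin 4) where
  Adj p q := p ≠ q ∧ (p.1 = q.1 ∨ (p.2 = 0 ∧ q.2 = 0 ∧ Nat.dist p.1 q.1 = 1))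
  symm := by
    constructor
    rintro p q ⟨hne, h⟩
    refine ⟨hne.symm, ?_⟩
    rcases h with h | ⟨h1, h2, h3⟩
    · exact Or.inl h.symm
    · exact Or.inr ⟨h2, h1, by rw [Nat.dist_comm]; exact h3⟩
  loopless := by constructor; rintro p ⟨h, -⟩; exact h rfl

instance : DecidableRel threeCliqueGraph.Adj := fun p q =>
  decidable_of_iff (p ≠ q ∧ (p.1 = q.1 ∨ (p.2 = 0 ∧ q.2 = 0 ∧ Nat.dist p.1 q.1 = 1))) Iff.rfl

lemma starNum_three : starNum threeCliqueGraph = 3 := by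
  have hcard : ¬ (Fintype.card (Fin 3 × Fin 4) ≤ 2) := by decide
  rw [starNum, if_neg hcard]
  apply le_antisymm
  · apply csSup_le
    · refine ⟨0, (1, 1), ∅, by simp, by simp [SimpleGraph.IsClique], by simp, rfl⟩
    · rintro k ⟨r, L, -, hclique, -, rfl⟩
      have hinj : Set.InjOn Prod.fst (L : Set (Fin 3 × Fin 4)) := by
        intro u hu v hv h1
        by_contra hne
        have hadj : threeCliqueGraph.Adj u v := ⟨hne, Or.inl h1⟩
        exact (hclique hu hv hne).2 hadj
      calc L.card ≤ (Finset.univ : Finset (Fin 3)).card :=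
            Finset.card_le_card_of_injOn Prod.fst (fun _ _ => Finset.mem_univ _) hinj
        _ = 3 := by decide
  · apply le_csSup
    · refine ⟨3, ?_⟩
      rintro k ⟨r, L, -, hclique, -, rfl⟩
      have hinj : Set.InjOn Prod.fst (L : Set (Fin 3 × Fin 4)) := by
        intro u hu v hv h1
        by_contra hne
        have hadj : threeCliqueGraph.Adj u v := ⟨hne, Or.inl h1⟩
        exact (hclique hu hv hne).2 hadj
      calc L.card ≤ (Finset.univ : Finset (Fin 3)).card :=
            Finset.card_le_card_of_injOn Prod.fst (fun _ _ => Finset.mem_univ _) hinj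
        _ = 3 := by decide
    · refine ⟨((1 : Fin 3), (0 : Fin 4)),
        ({((0 : Fin 3), (0 : Fin 4)), ((2 : Fin 3), (0 : Fin 4)), ((1 : Fin 3), (1 : Fin 4))} :
          Finset (Fin 3 × Fin 4)), by decide, ?_, ?_, by decide⟩
      · intro u hu v hv huv
        simp only [Finset.coe_insert, Set.mem_insert_iff, Finset.coe_singleton,
          Set.mem_singleton_iff] at hu hv
        rcases hu with rfl | rfl | rfl <;> rcases hv with rfl | rfl | rfl <;>
          first
            | exact absurd rfl huv
            | exact ⟨huv, by decide⟩
      · intro v hv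
        fin_cases hv <;> decide

lemma ccw_one : CCW threeCliqueGraph = 1 := by
  have hmem : (1 : ℕ) ∈ {w : ℕ | ∃ f : Fin 3 × Fin 4 → ℕ,
      IsOrderedCliqueCover threeCliqueGraph f ∧ coverWidth threeCliqueGraph f = w} := by
    refine ⟨fun p => (p.1 : ℕ), ?_, ?_⟩
    · intro n u hu v hv huv
      refine ⟨huv, Or.inl ?_⟩
      have : (u.1 : ℕ) = (v.1 : ℕ) := by
        simp only [Set.mem_setOf_eq] at hu hv; omega
      exact Fin.val_injective this
    · have hbd : ∀ d ∈ {d : ℕ | ∃ x y, threeCliqueGraph.Adj x y ∧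
          d = Nat.dist ((x.1 : ℕ)) ((y.1 : ℕ))}, d ≤ 1 := by
        rintro d ⟨x, y, ⟨-, hxy⟩, rfl⟩
        rcases hxy with h | ⟨-, -, h⟩
        · simp [h, Nat.dist_self]
        · omega
      apply le_antisymm
      · exact csSup_le ⟨1, ((0 : Fin 3), (0 : Fin 4)), ((1 : Fin 3), (0 : Fin 4)),
          by decide, by decide⟩ hbd
      · exact le_csSup ⟨1, hbd⟩ ⟨((0 : Fin 3), (0 : Fin 4)), ((1 : Fin 3), (0 : Fin 4)),
          by decide, by decide⟩
  apply le_antisymm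
  · exact Nat.sInf_le hmem
  · rw [Nat.one_le_iff_ne_zero]
    intro h0
    have h0' : (0 : ℕ) ∈ {w : ℕ | ∃ f : Fin 3 × Fin 4 → ℕ,
        IsOrderedCliqueCover threeCliqueGraph f ∧ coverWidth threeCliqueGraph f = w} := by
      rw [← h0]; exact Nat.sInf_mem ⟨1, hmem⟩
    obtain ⟨f, hcover, hw⟩ := h0'
    set S := {d : ℕ | ∃ x y, threeCliqueGraph.Adj x y ∧ d = Nat.dist (f x) (f y)} with hS
    have hbdd : BddAbove S := by
      apply Set.Finite.bddAbove
      apply Set.Finite.subset (Set.finite_range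
        (fun p : (Fin 3 × Fin 4) × (Fin 3 × Fin 4) => Nat.dist (f p.1) (f p.2)))
      rintro d ⟨x, y, -, rfl⟩
      exact ⟨(x, y), rfl⟩
    have hedge : ∀ x y : Fin 3 × Fin 4, threeCliqueGraph.Adj x y → f x = f y := by
      intro x y hxy
      have : Nat.dist (f x) (f y) ≤ 0 := by
        rw [← hw]; exact le_csSup hbdd ⟨x, y, hxy, rfl⟩
      exact Nat.eq_of_dist_eq_zero (Nat.le_zero.mp this)
    have e1 : f ((0 : Fin 3), (1 : Fin 4)) = f ((0 : Fin 3), (0 : Fin 4)) :=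
      hedge _ _ (by decide)
    have e2 : f ((0 : Fin 3), (0 : Fin 4)) = f ((1 : Fin 3), (0 : Fin 4)) :=
      hedge _ _ (by decide)
    have e3 : f ((1 : Fin 3), (0 : Fin 4)) = f ((1 : Fin 3), (1 : Fin 4)) :=
      hedge _ _ (by decide)
    have hmem1 : ((0 : Fin 3), (1 : Fin 4)) ∈ {v | f v = f ((0 : Fin 3), (1 : Fin 4))} := rfl
    have hmem2 : ((1 : Fin 3), (1 : Fin 4)) ∈ {v | f v = f ((0 : Fin 3), (1 : Fin 4))} := by
      simp only [Set.mem_setOf_eq]; omega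
    have hadj := hcover (f ((0 : Fin 3), (1 : Fin 4))) hmem1 hmem2 (by decide)
    revert hadj
    decide

theorem stmt19 : starNum threeCliqueGraph = 3 ∧ CCW threeCliqueGraph = 1 :=
  ⟨starNum_three, ccw_one⟩
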